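/- (Cramér–Rao-type variance lower bound.) Let θ : ℝ → ℝ be twice continuously differentiable with exp(−θ) integrable, and let p be the probability measure on ℝ with density proportional to exp(−θ). Assume p has finite second moment, θ'(x)², θ''(x) and x·θ'(x) are p-integrable, and both exp(−θ(x)) and θ'(x)·exp(−θ(x)) tend to 0 as x → ±∞. Then Var_p(x) · E_p[θ''(x)] ≥ 1; equivalently, the precision of p satisfies Var_p(x)⁻¹ ≤ E_p[θ''(x)]. -/

import Mathlib

open MeasureTheory Real Filter
open scoped NNReal ENNReal

noncomputable section

/-- The probability measure on ℝ with density proportional to `exp (−θ)`. -/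
def gibbs (θ : ℝ → ℝ) : Measure ℝ :=
  ((volume.withDensity fun x => ENNReal.ofReal (Real.exp (-θ x))) Set.univ)⁻¹ •
    (volume.withDensity fun x => ENNReal.ofReal (Real.exp (-θ x)))

lemma gibbs_eq (θ : ℝ → ℝ) (hint : Integrable fun x => Real.exp (-θ x)) :
    gibbs θ = (ENNReal.ofReal (∫ x, Real.exp (-θ x)))⁻¹ •
      (volume.withDensity fun x => ENNReal.ofReal (Real.exp (-θ x))) := by
  unfold gibbs
  rw [withDensity_apply _ MeasurableSet.univ, setLIntegral_univ,
    ← ofReal_integral_eq_lintegral_ofReal hint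
      (Filter.Eventually.of_forall fun x => (Real.exp_pos _).le)]

lemma gibbs_integral (θ : ℝ → ℝ) (hθc : Continuous θ)
    (hint : Integrable fun x => Real.exp (-θ x)) (f : ℝ → ℝ) :
    ∫ x, f x ∂(gibbs θ)
      = (∫ x, Real.exp (-θ x))⁻¹ * ∫ x, f x * Real.exp (-θ x) := by
  have hmeas : Measurable (fun x => Real.toNNReal (Real.exp (-θ x))) :=
    (Real.continuous_exp.comp hθc.neg).measurable.real_toNNReal
  have hd : (fun x : ℝ => ENNReal.ofReal (Real.exp (-θ x)))
      = (fun x : ℝ => ((Real.toNNReal (Real.exp (-θ x)) : ℝ≥0) : ℝ≥0∞)) := rfl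
  rw [gibbs_eq θ hint, integral_smul_measure, hd,
    integral_withDensity_eq_integral_smul hmeas]
  have hnn : (0:ℝ) ≤ ∫ x, Real.exp (-θ x) := integral_nonneg fun x => (Real.exp_pos _).le
  rw [ENNReal.toReal_inv, ENNReal.toReal_ofReal hnn, smul_eq_mul]
  congr 1
  congr 1
  funext x
  rw [NNReal.smul_def, Real.coe_toNNReal _ ((Real.exp_pos _).le), smul_eq_mul, mul_comm]

lemma gibbs_integrable (θ : ℝ → ℝ) (hθc : Continuous θ)
    (hint : Integrable fun x => Real.exp (-θ x))
    (hZpos : 0 < ∫ x, Real.exp (-θ x)) {f : ℝ → ℝ}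
    (hf : Integrable f (gibbs θ)) :
    Integrable (fun x => f x * Real.exp (-θ x)) := by
  have hmeas : Measurable (fun x => Real.toNNReal (Real.exp (-θ x))) :=
    (Real.continuous_exp.comp hθc.neg).measurable.real_toNNReal
  have hd : (fun x : ℝ => ENNReal.ofReal (Real.exp (-θ x)))
      = (fun x : ℝ => ((Real.toNNReal (Real.exp (-θ x)) : ℝ≥0) : ℝ≥0∞)) := rfl
  rw [gibbs_eq θ hint] at hf
  rw [integrable_smul_measure (by simp) (by simp [hZpos])] at hf
  rw [hd, integrable_withDensity_iff_integrable_smul hmeas] at hf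
  have : (fun x => Real.toNNReal (Real.exp (-θ x)) • f x)
      = fun x => f x * Real.exp (-θ x) := by
    funext x
    rw [NNReal.smul_def, Real.coe_toNNReal _ ((Real.exp_pos _).le), smul_eq_mul, mul_comm]
  rwa [this] at hf

/-- Cramér–Rao-type variance lower bound: for `p ∝ exp (−θ)` with
`θ` C², `exp (−θ)` integrable, finite second moment, `θ'²`, `θ''` and `x·θ'(x)`
`p`-integrable, and both `exp (−θ)` and `θ'·exp (−θ)` vanishing at `±∞`, one has
`Var_p(x) · E_p[θ''(x)] ≥ 1`, equivalently `Var_p(x)⁻¹ ≤ E_p[θ''(x)]`. -/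
theorem cramer_rao_lower_bound
    (θ : ℝ → ℝ) (hθ : ContDiff ℝ 2 θ)
    (hint : Integrable fun x => Real.exp (-θ x))
    (hm1 : Integrable (fun x => x) (gibbs θ))
    (hm2 : Integrable (fun x => x ^ 2) (gibbs θ))
    (h1 : Integrable (fun x => (deriv θ x) ^ 2) (gibbs θ))
    (h2 : Integrable (fun x => iteratedDeriv 2 θ x) (gibbs θ))
    (h3 : Integrable (fun x => x * deriv θ x) (gibbs θ))
    (htop0 : Tendsto (fun x => Real.exp (-θ x)) atTop (nhds 0))
    (hbot0 : Tendsto (fun x => Real.exp (-θ x)) atBot (nhds 0))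
    (htop1 : Tendsto (fun x => deriv θ x * Real.exp (-θ x)) atTop (nhds 0))
    (hbot1 : Tendsto (fun x => deriv θ x * Real.exp (-θ x)) atBot (nhds 0)) :
    1 ≤ ((∫ x, x ^ 2 ∂(gibbs θ)) - (∫ x, x ∂(gibbs θ)) ^ 2) *
        (∫ x, iteratedDeriv 2 θ x ∂(gibbs θ)) ∧
    ((∫ x, x ^ 2 ∂(gibbs θ)) - (∫ x, x ∂(gibbs θ)) ^ 2)⁻¹ ≤
        ∫ x, iteratedDeriv 2 θ x ∂(gibbs θ) := by
  have hθc : Continuous θ := hθ.continuous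
  -- positivity of the normalizing constant
  have hZpos : 0 < ∫ x, Real.exp (-θ x) := by
    rw [integral_pos_iff_support_of_nonneg (fun x => (Real.exp_pos _).le) hint]
    have hsupp : Function.support (fun x : ℝ => Real.exp (-θ x)) = Set.univ :=
      Set.eq_univ_of_forall fun x => (Real.exp_pos _).ne'
    rw [hsupp]
    simp [Real.volume_univ]
  set Z : ℝ := ∫ x, Real.exp (-θ x) with hZdef
  -- differentiability facts
  have h2' : ContDiff ℝ (((1:ℕ):ℕ∞)+1) θ := hθ.of_le (by norm_num)
  rw [contDiff_succ_iff_deriv] at h2'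
  have h1' : ContDiff ℝ (((0:ℕ):ℕ∞)+1) (deriv θ) := h2'.2.2.of_le (by norm_num)
  rw [contDiff_succ_iff_deriv] at h1'
  have hθd : ∀ x, HasDerivAt θ (deriv θ x) x := fun x => (h2'.1 x).hasDerivAt
  have hθ'd : ∀ x, HasDerivAt (deriv θ) (deriv (deriv θ) x) x := fun x => (h1'.1 x).hasDerivAt
  have hθ'c : Continuous (deriv θ) := h1'.1.continuous
  -- iterated derivative
  have hiter : ∀ x, iteratedDeriv 2 θ x = deriv (deriv θ) x := by
    intro x
    rw [show (2:ℕ) = 1 + 1 from rfl, iteratedDeriv_succ, iteratedDeriv_one]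
  -- volume-level integrabilities
  have Ixw : Integrable (fun x => x * Real.exp (-θ x)) :=
    gibbs_integrable θ hθc hint hZpos hm1
  have Ix2w : Integrable (fun x => x^2 * Real.exp (-θ x)) :=
    gibbs_integrable θ hθc hint hZpos hm2
  have Iθ'2w : Integrable (fun x => (deriv θ x)^2 * Real.exp (-θ x)) :=
    gibbs_integrable θ hθc hint hZpos h1
  have Iθ''w : Integrable (fun x => deriv (deriv θ) x * Real.exp (-θ x)) := by
    have := gibbs_integrable θ hθc hint hZpos h2
    refine this.congr (Filter.Eventually.of_forall fun x => ?_)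
    simp [hiter x]
  have Ixθ'w : Integrable (fun x => (x * deriv θ x) * Real.exp (-θ x)) :=
    gibbs_integrable θ hθc hint hZpos h3
  have Iθ'w : Integrable (fun x => deriv θ x * Real.exp (-θ x)) := by
    have hbound : Integrable
        (fun x => ((deriv θ x)^2 * Real.exp (-θ x) + Real.exp (-θ x)) / 2) := by
      exact (Iθ'2w.add hint).div_const 2
    refine Integrable.mono' hbound
      ((hθ'c.mul (Real.continuous_exp.comp hθc.neg)).aestronglyMeasurable)
      (Filter.Eventually.of_forall fun x => ?_)
    rw [Real.norm_eq_abs, abs_mul, abs_of_nonneg (Real.exp_nonneg _)]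
    have h2a : 2 * |deriv θ x| ≤ (deriv θ x)^2 + 1 := by
      nlinarith [sq_nonneg (|deriv θ x| - 1), sq_abs (deriv θ x)]
    nlinarith [mul_le_mul_of_nonneg_right h2a (Real.exp_nonneg (-θ x))]
  -- step 1 : ∫ θ' w = 0
  have hE0 : ∫ x, deriv θ x * Real.exp (-θ x) = 0 := by
    have hder : ∀ x, HasDerivAt (fun y => -Real.exp (-θ y)) (deriv θ x * Real.exp (-θ x)) x := by
      intro x
      have h := ((hθd x).neg.exp).neg
      refine (h : HasDerivAt (fun y => -Real.exp (-θ y)) _ x).congr_deriv ?_; simp only [Pi.neg_apply]; ring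
    have := integral_of_hasDerivAt_of_tendsto hder Iθ'w
      (by simpa using hbot0.neg) (by simpa using htop0.neg)
    simpa using this
  -- step 2 : ∫ x θ' w = ∫ w
  have hE1 : ∫ x, (x * deriv θ x) * Real.exp (-θ x) = Z := by
    have hder : ∀ x, HasDerivAt (fun y => -(y * Real.exp (-θ y)))
        ((x * deriv θ x) * Real.exp (-θ x) - Real.exp (-θ x)) x := by
      intro x
      have h := ((hasDerivAt_id x).mul ((hθd x).neg.exp)).neg
      refine (h : HasDerivAt (fun y => -(y * Real.exp (-θ y))) _ x).congr_deriv ?_; simp only [Pi.neg_apply, id_eq]; ring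
    have h0 := integral_eq_zero_of_hasDerivAt_of_integrable hder (Ixθ'w.sub hint) Ixw.neg
    rw [integral_sub Ixθ'w hint] at h0
    rw [← hZdef] at h0
    linarith
  -- step 3 : ∫ θ'' w = ∫ θ'^2 w
  have hE2 : ∫ x, deriv (deriv θ) x * Real.exp (-θ x)
      = ∫ x, (deriv θ x)^2 * Real.exp (-θ x) := by
    have hder : ∀ x, HasDerivAt (fun y => -(deriv θ y * Real.exp (-θ y)))
        ((deriv θ x)^2 * Real.exp (-θ x) - deriv (deriv θ) x * Real.exp (-θ x)) x := by
      intro x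
      have h := ((hθ'd x).mul ((hθd x).neg.exp)).neg
      refine (h : HasDerivAt (fun y => -(deriv θ y * Real.exp (-θ y))) _ x).congr_deriv ?_; simp only [Pi.neg_apply]; ring
    have h0 := integral_of_hasDerivAt_of_tendsto hder (Iθ'2w.sub Iθ''w)
      (by simpa using hbot1.neg) (by simpa using htop1.neg)
    rw [integral_sub Iθ'2w Iθ''w] at h0
    simp at h0
    linarith
  -- abbreviations
  set A : ℝ := ∫ x, x^2 * Real.exp (-θ x) with hAdef
  set B : ℝ := ∫ x, x * Real.exp (-θ x) with hBdef
  set C : ℝ := ∫ x, (deriv θ x)^2 * Real.exp (-θ x) with hCdef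
  have hμ1 : ∫ x, x ∂(gibbs θ) = Z⁻¹ * B := gibbs_integral θ hθc hint _
  have hm2eq : ∫ x, x^2 ∂(gibbs θ) = Z⁻¹ * A := gibbs_integral θ hθc hint _
  have hSeq : ∫ x, iteratedDeriv 2 θ x ∂(gibbs θ) = Z⁻¹ * C := by
    have hcong : (∫ x, iteratedDeriv 2 θ x * Real.exp (-θ x))
        = ∫ x, deriv (deriv θ) x * Real.exp (-θ x) := by
      congr 1
      funext x
      rw [hiter x]
    rw [gibbs_integral θ hθc hint, hcong, hE2]
  set μ : ℝ := ∫ x, x ∂(gibbs θ)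
  -- the quadratic key inequality
  have key : ∀ t : ℝ, 0 ≤ t^2 * ((Z⁻¹*A) - μ^2) - 2*t + Z⁻¹*C := by
    intro t
    have J1 : Integrable (fun x => t^2 * (x^2 * Real.exp (-θ x))) := Ix2w.const_mul _
    have J2 : Integrable (fun x => (-(2*t^2*μ)) * (x * Real.exp (-θ x))) := Ixw.const_mul _
    have J3 : Integrable (fun x => (t^2*μ^2) * Real.exp (-θ x)) := hint.const_mul _
    have J4 : Integrable (fun x => (-(2*t)) * ((x * deriv θ x) * Real.exp (-θ x))) :=
      Ixθ'w.const_mul _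
    have J5 : Integrable (fun x => (2*t*μ) * (deriv θ x * Real.exp (-θ x))) :=
      Iθ'w.const_mul _
    have hnn : 0 ≤ ∫ x, (t*(x - μ) - deriv θ x)^2 * Real.exp (-θ x) :=
      integral_nonneg fun x => mul_nonneg (sq_nonneg _) (Real.exp_nonneg _)
    have hIq : ∫ x, (t*(x - μ) - deriv θ x)^2 * Real.exp (-θ x)
        = t^2 * A + (-(2*t^2*μ)) * B + (t^2*μ^2) * Z + (-(2*t)) * Z + (2*t*μ) * 0 + C := by
      calc ∫ x, (t*(x - μ) - deriv θ x)^2 * Real.exp (-θ x)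
          = ∫ x, (t^2 * (x^2 * Real.exp (-θ x))
              + (-(2*t^2*μ)) * (x * Real.exp (-θ x))
              + (t^2*μ^2) * Real.exp (-θ x)
              + (-(2*t)) * ((x * deriv θ x) * Real.exp (-θ x))
              + (2*t*μ) * (deriv θ x * Real.exp (-θ x))
              + (deriv θ x)^2 * Real.exp (-θ x)) := by
            congr 1; funext x; ring
        _ = t^2 * A + (-(2*t^2*μ)) * B + (t^2*μ^2) * Z + (-(2*t)) * Z + (2*t*μ) * 0 + C := by
            have K2 : Integrable (fun x => t^2 * (x^2 * Real.exp (-θ x))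
                + (-(2*t^2*μ)) * (x * Real.exp (-θ x))) := by exact J1.add J2
            have K3 : Integrable (fun x => t^2 * (x^2 * Real.exp (-θ x))
                + (-(2*t^2*μ)) * (x * Real.exp (-θ x))
                + (t^2*μ^2) * Real.exp (-θ x)) := by exact K2.add J3
            have K4 : Integrable (fun x => t^2 * (x^2 * Real.exp (-θ x))
                + (-(2*t^2*μ)) * (x * Real.exp (-θ x))
                + (t^2*μ^2) * Real.exp (-θ x)
                + (-(2*t)) * ((x * deriv θ x) * Real.exp (-θ x))) := by exact K3.add J4
            have K5 : Integrable (fun x => t^2 * (x^2 * Real.exp (-θ x))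
                + (-(2*t^2*μ)) * (x * Real.exp (-θ x))
                + (t^2*μ^2) * Real.exp (-θ x)
                + (-(2*t)) * ((x * deriv θ x) * Real.exp (-θ x))
                + (2*t*μ) * (deriv θ x * Real.exp (-θ x))) := by exact K4.add J5
            rw [integral_add K5 Iθ'2w, integral_add K4 J5, integral_add K3 J4,
              integral_add K2 J3, integral_add J1 J2,
              integral_const_mul, integral_const_mul, integral_const_mul,
              integral_const_mul, integral_const_mul, hE0, hE1]
    have h0 : 0 ≤ Z⁻¹ * (t^2 * A + (-(2*t^2*μ)) * B + (t^2*μ^2) * Z + (-(2*t)) * Z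
        + (2*t*μ) * 0 + C) := by
      rw [← hIq]; exact mul_nonneg (inv_nonneg.2 hZpos.le) hnn
    have hinv : Z⁻¹ * Z = 1 := inv_mul_cancel₀ hZpos.ne'
    have hμB : μ = Z⁻¹ * B := hμ1
    calc (0:ℝ) ≤ Z⁻¹ * (t^2 * A + (-(2*t^2*μ)) * B + (t^2*μ^2) * Z + (-(2*t)) * Z
        + (2*t*μ) * 0 + C) := h0
      _ = t^2 * (Z⁻¹*A) - 2*t^2*μ*(Z⁻¹*B) + t^2*μ^2*(Z⁻¹*Z) - 2*t*(Z⁻¹*Z) + Z⁻¹*C := by ring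
      _ = t^2 * ((Z⁻¹*A) - μ^2) - 2*t + Z⁻¹*C := by rw [hinv, ← hμB]; ring
  -- finish
  have hC0 : 0 ≤ Z⁻¹ * C := by
    refine mul_nonneg (inv_nonneg.2 hZpos.le) ?_
    exact integral_nonneg fun x => mul_nonneg (sq_nonneg _) (Real.exp_nonneg _)
  set V : ℝ := (Z⁻¹*A) - μ^2 with hVdef
  set S : ℝ := Z⁻¹ * C with hSdef
  have hVpos : 0 < V := by
    by_contra h
    push_neg at h
    have hk := key (S/2 + 1)
    have ht : (0:ℝ) < S/2 + 1 := by linarith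
    nlinarith [mul_nonpos_of_nonneg_of_nonpos (sq_nonneg (S/2+1)) h]
  have hinvle : V⁻¹ ≤ S := by
    have hk := key V⁻¹
    have e : (V⁻¹)^2 * V = V⁻¹ := by
      rw [sq, mul_assoc, inv_mul_cancel₀ hVpos.ne', mul_one]
    rw [e] at hk
    linarith
  have hone : 1 ≤ V * S := by
    have h := mul_le_mul_of_nonneg_left hinvle hVpos.le
    rwa [mul_inv_cancel₀ hVpos.ne'] at h
  rw [hm2eq, hSeq]
  exact ⟨hone, hinvle⟩
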